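/- arXiv:1009.5633 — 2 statements merged into one kernel-verified Lean document; each statement's English description precedes it below -/
import Mathlib

section
/- Every biconnected simple graph of rank exactly 2 is a theta graph Θ(a,b,c): two vertices joined by three internally disjoint paths of lengths a, b, c ≥ 1, at most one of which has length 1. -/
open SimpleGraph

/-- The density of a finite simple graph: number of edges divided by number of vertices. -/
noncomputable def density {V : Type} [Fintype V] (G : SimpleGraph V) : ℝ :=
  (Nat.card G.edgeSet : ℝ) / (Fintype.card V : ℝ)

/-- `H` is a minor of `G`: there is an assignment of disjoint connected branch sets of `G`
(the fibers of `f` over `some w`) to the vertices of `H` such that every edge of `H`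
is realized by an edge of `G` between the corresponding branch sets. -/
def IsMinor {W V : Type} (H : SimpleGraph W) (G : SimpleGraph V) : Prop :=
  ∃ f : V → Option W,
    (∀ w : W, ∃ v : V, f v = some w) ∧
    (∀ w : W, (G.induce {v : V | f v = some w}).Connected) ∧
    (∀ w₁ w₂ : W, H.Adj w₁ w₂ →
      ∃ v₁ v₂ : V, f v₁ = some w₁ ∧ f v₂ = some w₂ ∧ G.Adj v₁ v₂)

/-- A proper minor: a minor with strictly fewer vertices plus edges. -/
def IsProperMinor {W V : Type} [Fintype W] [Fintype V]
    (H : SimpleGraph W) (G : SimpleGraph V) : Prop :=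
  IsMinor H G ∧
    Fintype.card W + Nat.card H.edgeSet < Fintype.card V + Nat.card G.edgeSet

/-- A graph is density-minimal if no (nonempty) proper minor has density greater than
or equal to its own density. -/
def DensityMinimal {V : Type} [Fintype V] (G : SimpleGraph V) : Prop :=
  ∀ (W : Type) [Fintype W] [Nonempty W] (H : SimpleGraph W),
    IsProperMinor H G → density H < density G

/-- A graph is biconnected (2-vertex-connected) if it has at least 3 vertices, is
connected, and remains connected after deleting any single vertex. -/
def Biconnected {V : Type} [Fintype V] (G : SimpleGraph V) : Prop :=
  3 ≤ Fintype.card V ∧ G.Connected ∧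
    ∀ v : V, (G.induce {u : V | u ≠ v}).Connected

/-- `G` is a theta graph Θ(a,b,c): two distinct vertices joined by three internally
vertex-disjoint paths of lengths a, b, c which together use every vertex and edge. -/
def IsThetaGraph {V : Type} (G : SimpleGraph V) (a b c : ℕ) : Prop :=
  ∃ (u v : V), u ≠ v ∧ ∃ (p q r : G.Walk u v),
    p.IsPath ∧ q.IsPath ∧ r.IsPath ∧
    p.length = a ∧ q.length = b ∧ r.length = c ∧
    (∀ x, x ∈ p.support → x ∈ q.support → x = u ∨ x = v) ∧
    (∀ x, x ∈ p.support → x ∈ r.support → x = u ∨ x = v) ∧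
    (∀ x, x ∈ q.support → x ∈ r.support → x = u ∨ x = v) ∧
    (∀ e ∈ G.edgeSet, e ∈ p.edges ∨ e ∈ q.edges ∨ e ∈ r.edges) ∧
    (∀ x : V, x ∈ p.support ∨ x ∈ q.support ∨ x ∈ r.support)

namespace ThetaAux
variable {V : Type}

/-- endpoint of every walk from a vertex in an adjacency-closed set stays in the set -/
lemma walk_closed {G : SimpleGraph V} {T : Set V}
    (hT : ∀ a b, a ∈ T → G.Adj a b → b ∈ T) :
    ∀ {x y : V} (_ : G.Walk x y), x ∈ T → y ∈ T := by
  intro x y w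
  induction w with
  | nil => exact id
  | cons h p ih => intro hx; exact ih (hT _ _ hx h)

/-- a path has at most one edge incident to its final vertex -/
lemma path_end_unique_edge {G : SimpleGraph V} :
    ∀ {a y : V} (P : G.Walk a y), P.IsPath →
      ∀ z₁ z₂ : V, s(y, z₁) ∈ P.edges → s(y, z₂) ∈ P.edges → z₁ = z₂ := by
  intro a y P
  induction P with
  | nil => intro _ z₁ z₂ h1; simp at h1
  | @cons u b y h p ih =>
    intro hP z₁ z₂ h1 h2
    have hp : p.IsPath := hP.of_cons
    have hu : u ∉ p.support := (Walk.cons_isPath_iff _ _).mp hP |>.2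
    have hyu : y ≠ u := fun hyx => hu (hyx ▸ p.end_mem_support)
    have key : ∀ z : V, s(y, z) = s(u, b) → y = b ∧ z = u := by
      intro z hz
      rw [Sym2.eq_iff] at hz
      rcases hz with ⟨hy, hzb⟩ | ⟨hy, hzb⟩
      · exact absurd hy hyu
      · exact ⟨hy, hzb⟩
    rw [Walk.edges_cons, List.mem_cons] at h1 h2
    rcases h1 with h1 | h1
    · obtain ⟨hyb, hz1⟩ := key _ h1
      subst hyb
      -- p : Walk y y is a path, hence nil, hence edges empty
      have hpnil : p = Walk.nil := (Walk.isPath_iff_eq_nil (p := p)).mp hp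
      rcases h2 with h2 | h2
      · obtain ⟨_, hz2⟩ := key _ h2; rw [hz1, hz2]
      · rw [hpnil] at h2; simp at h2
    · rcases h2 with h2 | h2
      · obtain ⟨hyb, _⟩ := key _ h2
        subst hyb
        have hpnil : p = Walk.nil := (Walk.isPath_iff_eq_nil (p := p)).mp hp
        rw [hpnil] at h1; simp at h1
      · exact ih hp z₁ z₂ h1 h2





lemma isPath_concat {G : SimpleGraph V} {u v w : V} {p : G.Walk u v}
    (hp : p.IsPath) (h : G.Adj v w) (hw : w ∉ p.support) : (p.concat h).IsPath := by
  have : (Walk.cons h.symm p.reverse).IsPath := by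
    rw [Walk.cons_isPath_iff]
    exact ⟨hp.reverse, by simpa using hw⟩
  have h2 := this.reverse
  rwa [Walk.reverse_cons, Walk.reverse_reverse] at h2

lemma first_edge {G : SimpleGraph V} {u v : V} (p : G.Walk u v) (hp : ¬ p.Nil) :
    ∃ z, G.Adj u z ∧ s(u, z) ∈ p.edges ∧ z ∈ p.support := by
  cases p with
  | nil => simp at hp
  | cons h q =>
    exact ⟨_, h, by simp, by simp [q.start_mem_support]⟩

lemma last_edge {G : SimpleGraph V} {u v : V} (p : G.Walk u v) (hp : ¬ p.Nil) :
    ∃ z, G.Adj v z ∧ s(v, z) ∈ p.edges ∧ z ∈ p.support := by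
  have hrev : ¬ p.reverse.Nil := by
    rw [Walk.nil_iff_length_eq, Walk.length_reverse, ← Walk.nil_iff_length_eq]; exact hp
  obtain ⟨z, hadj, hmem, hsup⟩ := first_edge p.reverse hrev
  refine ⟨z, hadj, ?_, ?_⟩
  · rwa [Walk.edges_reverse, List.mem_reverse] at hmem
  · rwa [Walk.support_reverse, List.mem_reverse] at hsup

lemma end_mem_tail_support {G : SimpleGraph V} {x y : V} (W : G.Walk x y)
    (hW : ¬ W.Nil) : y ∈ W.support.tail := by
  cases W with
  | nil => simp at hW
  | cons h p => simpa using p.end_mem_support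

/-- every member of the support of a nonnil closed walk is in the tail of the support -/
lemma mem_support_tail_of_closed {G : SimpleGraph V} {x y : V} (W : G.Walk x x)
    (hW : ¬ W.Nil) (hy : y ∈ W.support) : y ∈ W.support.tail := by
  rcases List.mem_cons.mp (W.support_eq_cons ▸ hy) with h | h
  · exact h ▸ end_mem_tail_support W hW
  · exact h

lemma getLast_support' {G : SimpleGraph V} {x y : V} (W : G.Walk x y) :
    W.support.getLast (by simp [W.support_ne_nil]) = y := W.getLast_support




lemma exists_max_path (H : SimpleGraph V) [Fintype V] (x : V) :
    ∃ (a b : V) (P : H.Walk a b), P.IsPath ∧ x ∈ P.support ∧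
      ∀ (a' b' : V) (Q : H.Walk a' b'), Q.IsPath → x ∈ Q.support → Q.length ≤ P.length := by
  classical
  let s : Finset ℕ := (Finset.range (Fintype.card V + 1)).filter
    (fun n => ∃ (a b : V) (Q : H.Walk a b), Q.IsPath ∧ x ∈ Q.support ∧ Q.length = n)
  have h0 : 0 ∈ s := by
    refine Finset.mem_filter.mpr ⟨Finset.mem_range.mpr (by positivity), x, x, Walk.nil, ?_⟩
    simp [Walk.IsPath.nil]
  obtain ⟨a, b, P, hP, hxP, hlen⟩ := (Finset.mem_filter.mp (s.max'_mem ⟨0, h0⟩)).2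
  refine ⟨a, b, P, hP, hxP, fun a' b' Q hQ hxQ => ?_⟩
  rw [hlen]
  exact Finset.le_max' s Q.length (Finset.mem_filter.mpr
    ⟨Finset.mem_range.mpr (Nat.lt_succ_of_lt hQ.length_lt), a', b', Q, hQ, hxQ, rfl⟩)

lemma path_eq_nil_of_loop {G : SimpleGraph V} {u : V} {p : G.Walk u u} (hp : p.IsPath) :
    p = Walk.nil := (Walk.isPath_iff_eq_nil (p := p)).mp hp

/-- endpoint of a maximum-length path (through x) in an acyclic graph where the endpoint
has two distinct neighbors leads to a contradiction -/
lemma max_path_end_two_nbrs {H : SimpleGraph V} (hac : H.IsAcyclic)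
    {a b x : V} {P : H.Walk a b} (hP : P.IsPath) (hx : x ∈ P.support)
    (hmax : ∀ (a' b' : V) (Q : H.Walk a' b'), Q.IsPath → x ∈ Q.support → Q.length ≤ P.length)
    {z₁ z₂ : V} (hne : z₁ ≠ z₂) (h1 : H.Adj b z₁) (h2 : H.Adj b z₂) : False := by
  classical
  -- at most one of z₁, z₂ has its edge to b in P
  have key : ∃ z, H.Adj b z ∧ s(b, z) ∉ P.edges := by
    by_contra hcon
    push_neg at hcon
    exact hne (path_end_unique_edge P hP z₁ z₂ (hcon z₁ h1) (hcon z₂ h2))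
  obtain ⟨z, hadj, hze⟩ := key
  by_cases hzs : z ∈ P.support
  · -- build a cycle
    have hd := hP.dropUntil hzs
    set d := P.dropUntil z hzs with hdDef
    have hde : s(b, z) ∉ d.edges := fun hc => hze (P.edges_dropUntil_subset hzs hc)
    have hcyc : (Walk.cons hadj d).IsCycle := by
      rw [Walk.cons_isCycle_iff]
      exact ⟨hd, hde⟩
    exact hac _ hcyc
  · -- extend the path
    have hP' := isPath_concat hP hadj hzs
    have := hmax _ _ (P.concat hadj) hP' (by
      rw [Walk.concat_eq_append, Walk.mem_support_append_iff]; exact Or.inl hx)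
    rw [Walk.length_concat] at this
    omega

/-- a vertex on a cycle has two distinct neighbors within the cycle -/
lemma cycle_two_nbrs {H : SimpleGraph V} {v y : V} {D : H.Walk v v} (hD : D.IsCycle)
    (hy : y ∈ D.support) :
    ∃ z₁ z₂, z₁ ≠ z₂ ∧ H.Adj y z₁ ∧ H.Adj y z₂ ∧
      z₁ ∈ D.support ∧ z₂ ∈ D.support ∧ s(y, z₁) ∈ D.edges ∧ s(y, z₂) ∈ D.edges := by
  classical
  have hD' : (D.rotate y hy).IsCycle := hD.rotate hy
  set D' := D.rotate y hy with hD'def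
  have hmemsup : ∀ w, w ∈ D'.support → w ∈ D.support := by
    intro w hw
    have hnil : ¬ D.Nil := by
      rw [Walk.not_nil_iff_lt_length]
      have := hD.three_le_length; omega
    have hnil' : ¬ D'.Nil := by
      rw [Walk.not_nil_iff_lt_length]
      have := hD'.three_le_length; omega
    have := mem_support_tail_of_closed D' hnil' hw
    have := (D.support_rotate y hy).mem_iff.mp this
    exact List.mem_of_mem_tail this
  have hmemedge : ∀ e, e ∈ D'.edges → e ∈ D.edges := fun e he =>
    (D.rotate_edges y hy).mem_iff.mp he
  cases hD'eq : D' with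
  | nil =>
    exfalso
    have := hD'.three_le_length
    rw [hD'eq] at this; simp at this
  | @cons _ w1 _ h W =>
    have hcyc2 : W.IsPath ∧ s(y, w1) ∉ W.edges := by
      rw [← Walk.cons_isCycle_iff]
      rw [← hD'eq]; exact hD'
      exact h
    have hWnil : ¬ W.Nil := by
      rw [Walk.not_nil_iff_lt_length]
      have h3 := hD'.three_le_length
      rw [hD'eq] at h3
      simp only [Walk.length_cons] at h3
      omega
    obtain ⟨z, hadjz, hze, hzs⟩ := last_edge W hWnil
    have hzw1 : z ≠ w1 := by
      intro hc
      subst hc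
      exact hcyc2.2 hze
    refine ⟨w1, z, fun hc => hzw1 hc.symm, h, hadjz, ?_, ?_, ?_, ?_⟩
    · apply hmemsup; rw [hD'eq]; simp [W.start_mem_support]
    · apply hmemsup; rw [hD'eq]; simp [hzs]
    · apply hmemedge; rw [hD'eq]; simp
    · apply hmemedge; rw [hD'eq]
      simp [hze]

lemma first_hit {G : SimpleGraph V} {T : Set V} :
    ∀ {x y : V} (w : G.Walk x y), x ∉ T → y ∈ T →
      ∃ a b, G.Adj a b ∧ a ∉ T ∧ b ∈ T ∧ b ∈ w.support := by
  intro x y w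
  induction w with
  | nil => intro hx hy; exact absurd hy hx
  | @cons u m _ h p ih =>
    intro hx hy
    by_cases hm : m ∈ T
    · exact ⟨u, m, h, hx, hm, by simp [p.start_mem_support]⟩
    · obtain ⟨a, b, h1, h2, h3, h4⟩ := ih hm hy
      exact ⟨a, b, h1, h2, h3, by simp [h4]⟩

lemma length_rotate [DecidableEq V] {G : SimpleGraph V} {u v : V} (c : G.Walk v v) (h : u ∈ c.support) :
    (c.rotate u h).length = c.length := by
  unfold Walk.rotate
  rw [Walk.length_append, Nat.add_comm, ← Walk.length_append, c.take_spec h]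

lemma cycle_not_nil {G : SimpleGraph V} {v : V} {C : G.Walk v v} (hC : C.IsCycle) : ¬ C.Nil := by
  rw [Walk.not_nil_iff_lt_length]
  have := hC.three_le_length; omega

lemma mem_support_rotate_iff [DecidableEq V] {G : SimpleGraph V} {u v x : V} {C : G.Walk v v} (hC : C.IsCycle)
    (h : u ∈ C.support) : x ∈ (C.rotate u h).support ↔ x ∈ C.support := by
  have h1 : ¬ C.Nil := cycle_not_nil hC
  have h2 : ¬ (C.rotate u h).Nil := cycle_not_nil (hC.rotate h)
  constructor
  · intro hx
    exact List.mem_of_mem_tail ((C.support_rotate u h).mem_iff.mp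
      (mem_support_tail_of_closed _ h2 hx))
  · intro hx
    exact List.mem_of_mem_tail ((C.support_rotate u h).mem_iff.mpr
      (mem_support_tail_of_closed _ h1 hx))

lemma cycle_split [DecidableEq V] {G : SimpleGraph V} {v0 : V} {C : G.Walk v0 v0} (hC : C.IsCycle) {u v : V}
    (hu : u ∈ C.support) (hv : v ∈ C.support) (huv : u ≠ v) :
    ∃ (p q : G.Walk u v), p.IsPath ∧ q.IsPath ∧ 1 ≤ p.length ∧ 1 ≤ q.length ∧
      p.length + q.length = C.length ∧
      (∀ x ∈ p.support, x ∈ C.support) ∧ (∀ x ∈ q.support, x ∈ C.support) ∧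
      (∀ x ∈ C.support, x ∈ p.support ∨ x ∈ q.support) ∧
      (∀ x, x ∈ p.support → x ∈ q.support → x = u ∨ x = v) ∧
      (∀ e ∈ C.edges, e ∈ p.edges ∨ e ∈ q.edges) ∧
      (∀ e ∈ p.edges, e ∈ C.edges) ∧ (∀ e ∈ q.edges, e ∈ C.edges) := by
  classical
  have hC' : (C.rotate u hu).IsCycle := hC.rotate hu
  set C' := C.rotate u hu with hC'def
  have hC'nil : ¬ C'.Nil := cycle_not_nil hC'
  have hv' : v ∈ C'.support := (mem_support_rotate_iff hC hu).mpr hv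
  set p := C'.takeUntil v hv' with hpdef
  set q' := C'.dropUntil v hv' with hq'def
  have hspec : p.append q' = C' := C'.take_spec hv'
  -- edges
  have hedges : p.edges ++ q'.edges = C'.edges := by
    rw [← Walk.edges_append, hspec]
  have hedgesC : ∀ e, e ∈ C'.edges ↔ e ∈ C.edges := fun e => (C.rotate_edges u hu).mem_iff
  -- supports
  have hsupp : p.support ++ q'.support.tail = C'.support := by
    rw [← Walk.support_append, hspec]
  have hp_cons : p.support = u :: p.support.tail := p.support_eq_cons
  have hq'_cons : q'.support = v :: q'.support.tail := q'.support_eq_cons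
  have htail : p.support.tail ++ q'.support.tail = C'.support.tail := by
    have : (u :: p.support.tail) ++ q'.support.tail = C'.support := by
      rw [← hp_cons]; exact hsupp
    rw [List.cons_append] at this
    rw [← this]
    simp
  have hnodupC : C'.support.tail.Nodup := hC'.2
  have hnodup_p : p.support.tail.Nodup := by
    have := htail ▸ hnodupC
    exact (List.nodup_append.mp this).1
  have hnodup_q : q'.support.tail.Nodup := by
    have := htail ▸ hnodupC
    exact (List.nodup_append.mp this).2.1
  have hdisj : List.Disjoint p.support.tail q'.support.tail := by
    have := htail ▸ hnodupC
    exact List.disjoint_of_nodup_append this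
  -- p and q' are not nil
  have hpnil : ¬ p.Nil := Walk.not_nil_of_ne huv
  have hq'nil : ¬ q'.Nil := Walk.not_nil_of_ne (Ne.symm huv)
  have hv_in_pt : v ∈ p.support.tail := end_mem_tail_support p hpnil
  have hu_in_qt : u ∈ q'.support.tail := end_mem_tail_support q' hq'nil
  have hu_notin_pt : u ∉ p.support.tail := fun hc => hdisj hc hu_in_qt
  have hv_notin_qt : v ∉ q'.support.tail := fun hc => hdisj hv_in_pt hc
  have hpPath : p.IsPath := by
    rw [Walk.isPath_def, hp_cons]
    exact List.nodup_cons.mpr ⟨hu_notin_pt, hnodup_p⟩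
  have hq'Path : q'.IsPath := by
    rw [Walk.isPath_def, hq'_cons]
    exact List.nodup_cons.mpr ⟨hv_notin_qt, hnodup_q⟩
  refine ⟨p, q'.reverse, hpPath, hq'Path.reverse, ?_, ?_, ?_, ?_, ?_, ?_, ?_, ?_, ?_, ?_⟩
  · rcases Nat.eq_zero_or_pos p.length with h0 | h0
    · exact absurd (Walk.nil_iff_length_eq.mpr h0) hpnil
    · exact h0
  · rw [Walk.length_reverse]
    rcases Nat.eq_zero_or_pos q'.length with h0 | h0
    · exact absurd (Walk.nil_iff_length_eq.mpr h0) hq'nil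
    · exact h0
  · rw [Walk.length_reverse]
    have : p.length + q'.length = C'.length := by
      rw [← Walk.length_append, hspec]
    rw [this, hC'def, length_rotate]
  · intro x hx
    have : x ∈ C'.support := hsupp ▸ List.mem_append_left _ hx
    exact (mem_support_rotate_iff hC hu).mp this
  · intro x hx
    rw [Walk.support_reverse, List.mem_reverse] at hx
    have : x ∈ C'.support := by
      rw [hq'_cons] at hx
      rcases List.mem_cons.mp hx with h | h
      · subst h; exact hv'
      · exact hsupp ▸ List.mem_append_right _ h
    exact (mem_support_rotate_iff hC hu).mp this
  · intro x hx
    have : x ∈ C'.support := (mem_support_rotate_iff hC hu).mpr hx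
    rw [← hsupp] at this
    rcases List.mem_append.mp this with h | h
    · exact Or.inl h
    · refine Or.inr ?_
      rw [Walk.support_reverse, List.mem_reverse]
      exact List.mem_of_mem_tail h
  · intro x hxp hxq
    rw [Walk.support_reverse, List.mem_reverse] at hxq
    by_contra hcon
    push_neg at hcon
    have hx1 : x ∈ p.support.tail := by
      rw [hp_cons] at hxp
      rcases List.mem_cons.mp hxp with h | h
      · exact absurd h hcon.1
      · exact h
    have hx2 : x ∈ q'.support.tail := by
      rw [hq'_cons] at hxq
      rcases List.mem_cons.mp hxq with h | h
      · exact absurd h hcon.2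
      · exact h
    exact hdisj hx1 hx2
  · intro e he
    rw [← hedgesC] at he
    rw [← hedges] at he
    rcases List.mem_append.mp he with h | h
    · exact Or.inl h
    · exact Or.inr (by rw [Walk.edges_reverse, List.mem_reverse]; exact h)
  · intro e he
    rw [← hedgesC e, ← hedges]
    exact List.mem_append_left _ he
  · intro e he
    rw [Walk.edges_reverse, List.mem_reverse] at he
    rw [← hedgesC e, ← hedges]
    exact List.mem_append_right _ he

lemma two_le_degree {G : SimpleGraph V} [Fintype V] [DecidableRel G.Adj]
    (h3 : 3 ≤ Fintype.card V) (hconn : G.Connected)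
    (hbc : ∀ v : V, (G.induce {u : V | u ≠ v}).Connected) (v : V) : 2 ≤ G.degree v := by
  classical
  -- v has a neighbor
  obtain ⟨u, hu⟩ : ∃ u : V, u ≠ v := by
    have : 1 < Fintype.card V := by omega
    obtain ⟨u, hu⟩ := Fintype.exists_ne_of_one_lt_card this v
    exact ⟨u, hu⟩
  have hw1 : ∃ w1, G.Adj v w1 := by
    obtain ⟨W⟩ := hconn.preconnected v u
    have hnil : ¬ W.Nil := Walk.not_nil_of_ne (Ne.symm hu)
    exact ⟨W.getVert 1, Walk.adj_snd hnil⟩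
  obtain ⟨w1, hw1⟩ := hw1
  by_contra hdeg
  push_neg at hdeg
  have huniq : ∀ z, G.Adj v z → z = w1 := by
    intro z hz
    by_contra hzw
    have : 1 < G.degree v := by
      rw [SimpleGraph.degree]
      exact Finset.one_lt_card.mpr
        ⟨z, (G.mem_neighborFinset v z).mpr hz, w1, (G.mem_neighborFinset v w1).mpr hw1, hzw⟩
    omega
  -- now delete w1
  have hind := hbc w1
  have hvne : v ≠ w1 := G.ne_of_adj hw1
  obtain ⟨y, hyv, hyw1⟩ : ∃ y : V, y ≠ v ∧ y ≠ w1 := by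
    have hcard : ({v, w1} : Finset V).card ≤ 2 := Finset.card_insert_le _ _ |>.trans (by simp)
    have : (({v, w1} : Finset V)ᶜ).Nonempty := by
      rw [← Finset.card_pos, Finset.card_compl]
      omega
    obtain ⟨y, hy⟩ := this
    rw [Finset.mem_compl, Finset.mem_insert, not_or, Finset.mem_singleton] at hy
    exact ⟨y, hy.1, hy.2⟩
  obtain ⟨W⟩ := hind.preconnected ⟨v, hvne⟩ ⟨y, hyw1⟩
  have hnil : ¬ W.Nil := Walk.not_nil_of_ne (by simp [Subtype.ext_iff]; exact Ne.symm hyv)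
  have hadj := Walk.adj_snd hnil
  have hginduce : G.Adj v (W.getVert 1).val := hadj
  have := huniq _ hginduce
  exact (W.getVert 1).prop this

lemma sym2_cases (e : Sym2 V) : ∃ u v, e = s(u, v) := Sym2.ind (fun a b => ⟨a, b, rfl⟩) e

lemma edge_of_length_one {G : SimpleGraph V} {u v : V} (p : G.Walk u v) (hp : p.length = 1) :
    s(u, v) ∈ p.edges := by
  cases p with
  | nil => simp at hp
  | @cons _ w _ h q =>
    have hq : q.length = 0 := by simp only [Walk.length_cons] at hp; omega
    have : q.Nil := Walk.nil_iff_length_eq.mpr hq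
    have hwv : w = v := this.eq
    subst hwv
    simp

end ThetaAux

open ThetaAux in
/-- Every biconnected simple graph of rank exactly 2 (m = n + 1) is a
theta graph Θ(a,b,c) with a, b, c ≥ 1 and at most one of a, b, c equal to 1. -/
theorem stmt10 (V : Type) [Fintype V] (G : SimpleGraph V)
    (hbc : Biconnected G)
    (hrank : Nat.card G.edgeSet = Fintype.card V + 1) :
    ∃ a b c : ℕ, 1 ≤ a ∧ 1 ≤ b ∧ 1 ≤ c ∧
      ¬(a = 1 ∧ b = 1) ∧ ¬(a = 1 ∧ c = 1) ∧ ¬(b = 1 ∧ c = 1) ∧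
      IsThetaGraph G a b c := by
  classical
  obtain ⟨hn3, hconn, hbcv⟩ := hbc
  have hecard : G.edgeFinset.card = Fintype.card V + 1 := by
    rw [SimpleGraph.edgeFinset_card]
    rw [← hrank]
    exact (Nat.card_eq_fintype_card).symm
  -- G has a cycle
  have hnotac : ¬ G.IsAcyclic := by
    intro hac
    have := SimpleGraph.IsTree.card_edgeFinset ⟨hconn, hac⟩
    omega
  rw [SimpleGraph.IsAcyclic] at hnotac
  push_neg at hnotac
  obtain ⟨v0, C, hC⟩ := hnotac
  have hCnil : ¬ C.Nil := cycle_not_nil hC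
  have hCl3 : 3 ≤ C.length := hC.three_le_length
  set CV : Finset V := C.support.toFinset with hCVdef
  have hCVmem : ∀ x : V, x ∈ CV ↔ x ∈ C.support := fun x => List.mem_toFinset
  have hCVcard : CV.card = C.length := by
    have h1 : C.support.toFinset = C.support.tail.toFinset := by
      ext x
      simp only [List.mem_toFinset]
      exact ⟨mem_support_tail_of_closed C hCnil, List.mem_of_mem_tail⟩
    have h2 : C.support.tail.length + 1 = C.support.length := by
      conv_rhs => rw [C.support_eq_cons]
      simp
    have h3 := C.length_support
    rw [hCVdef, h1, List.toFinset_card_of_nodup hC.2]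
    omega
  have hCVn : CV.card ≤ Fintype.card V := by
    simpa using Finset.card_le_univ CV
  -- the off-cycle graph H
  set H : SimpleGraph V := G.deleteEdges {e | e ∈ C.edges} with hHdef
  have hHadj : ∀ a b : V, H.Adj a b ↔ (G.Adj a b ∧ s(a, b) ∉ C.edges) := by
    intro a b
    rw [hHdef]
    simp [SimpleGraph.deleteEdges_adj]
  have hHedgeSet : ∀ e, e ∈ H.edgeSet ↔ e ∈ G.edgeSet ∧ e ∉ C.edges := by
    intro e
    rw [hHdef, SimpleGraph.edgeSet_deleteEdges]
    simp
  have hHedges : H.edgeFinset = G.edgeFinset \ C.edges.toFinset := by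
    ext e
    simp only [SimpleGraph.mem_edgeFinset, Finset.mem_sdiff, List.mem_toFinset]
    exact hHedgeSet e
  have hCedgesub : C.edges.toFinset ⊆ G.edgeFinset := by
    intro e he
    rw [List.mem_toFinset] at he
    exact SimpleGraph.mem_edgeFinset.mpr (C.edges_subset_edgeSet he)
  have hCedgecard : C.edges.toFinset.card = C.length := by
    rw [List.toFinset_card_of_nodup hC.edges_nodup, Walk.length_edges]
  set k : ℕ := Fintype.card V - CV.card with hkdef
  have hHcard : H.edgeFinset.card = k + 1 := by
    rw [hHedges, Finset.card_sdiff_of_subset hCedgesub, hecard, hCedgecard, ← hCVcard, hkdef]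
    omega
  -- neighbor sets agree off the cycle
  have hoffN : ∀ x : V, x ∉ CV → H.neighborFinset x = G.neighborFinset x := by
    intro x hx
    ext z
    simp only [SimpleGraph.mem_neighborFinset]
    rw [hHadj]
    refine ⟨fun h => h.1, fun h => ⟨h, fun hc => hx ?_⟩⟩
    exact (hCVmem x).mpr (C.fst_mem_support_of_mem_edges hc)
  have hoffdeg : ∀ x : V, x ∉ CV → H.degree x = G.degree x := by
    intro x hx
    rw [SimpleGraph.degree, SimpleGraph.degree, hoffN x hx]
  have hmindeg : ∀ v : V, 2 ≤ G.degree v := two_le_degree hn3 hconn hbcv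
  have hsum : ∑ v : V, H.degree v = 2 * (k + 1) := by
    rw [SimpleGraph.sum_degrees_eq_twice_card_edges, hHcard]
  have hsplit : (∑ v ∈ CV, H.degree v) + ∑ v ∈ CVᶜ, H.degree v = 2 * (k + 1) := by
    rw [Finset.sum_add_sum_compl]
    exact hsum
  have hoffcard : CVᶜ.card = k := by
    rw [Finset.card_compl, hkdef]
  have hoff2le : ∀ v ∈ CVᶜ, 2 ≤ H.degree v := fun v hv => by
    rw [hoffdeg v (Finset.mem_compl.mp hv)]; exact hmindeg v
  have hofflb : 2 * k ≤ ∑ v ∈ CVᶜ, H.degree v := by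
    have h1 := Finset.card_nsmul_le_sum CVᶜ (fun v => H.degree v) 2 hoff2le
    rw [smul_eq_mul, hoffcard, mul_comm] at h1
    exact h1
  have ht2 : ∑ v ∈ CV, H.degree v ≤ 2 := by omega
  -- an H-edge from off-cycle to the cycle, avoiding a given cycle vertex
  have hhit : 0 < k → ∀ c : V, c ∈ CV →
      ∃ a b : V, H.Adj a b ∧ a ∉ CV ∧ b ∈ CV ∧ b ≠ c := by
    intro hk c hc
    obtain ⟨x, hx⟩ : ∃ x, x ∈ CVᶜ := Finset.card_pos.mp (by omega)
    rw [Finset.mem_compl] at hx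
    obtain ⟨y, hy, hyc⟩ : ∃ y, y ∈ CV ∧ y ≠ c := by
      have h1 := Finset.card_erase_add_one hc
      obtain ⟨y, hy⟩ := Finset.card_pos.mp (by omega : 0 < (CV.erase c).card)
      exact ⟨y, Finset.mem_of_mem_erase hy, Finset.ne_of_mem_erase hy⟩
    have hxc : x ≠ c := fun h => hx (h ▸ hc)
    obtain ⟨W⟩ := (hbcv c).preconnected ⟨x, hxc⟩ ⟨y, hyc⟩
    let φ : G.induce {u : V | u ≠ c} →g G := ⟨Subtype.val, fun {p q} h => h⟩
    let W' : G.Walk x y := W.map φ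
    have hWsup : ∀ z ∈ W'.support, z ≠ c := by
      intro z hz
      rw [Walk.support_map, List.mem_map] at hz
      obtain ⟨t, _, ht⟩ := hz
      exact ht ▸ t.prop
    obtain ⟨a, b, hadj, ha, hb, hbw⟩ :=
      first_hit (T := {v : V | v ∈ CV}) W' hx hy
    refine ⟨a, b, (hHadj a b).mpr ⟨hadj, fun hc' => ha ?_⟩, ha, hb, hWsup b hbw⟩
    exact (hCVmem a).mpr (C.fst_mem_support_of_mem_edges hc')
  -- case split on k
  rcases Nat.eq_zero_or_pos k with hk0 | hkpos
  · -- Hamiltonian cycle plus one chord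
    have hCVuniv : CV = Finset.univ := by
      apply Finset.eq_univ_of_card
      omega
    have hallCV : ∀ x : V, x ∈ C.support := fun x =>
      (hCVmem x).mp (hCVuniv ▸ Finset.mem_univ x)
    have h1 : H.edgeFinset.card = 1 := by omega
    obtain ⟨e, he⟩ := Finset.card_eq_one.mp h1
    obtain ⟨u, v, rfl⟩ := sym2_cases e
    have heH : H.Adj u v := by
      have : s(u, v) ∈ H.edgeFinset := he ▸ Finset.mem_singleton_self _
      exact SimpleGraph.mem_edgeFinset.mp this
    obtain ⟨hGuv, hnotC⟩ := (hHadj u v).mp heH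
    have huv : u ≠ v := G.ne_of_adj hGuv
    obtain ⟨p, q, hp, hq, hp1, hq1, hpq, hpsub, hqsub, hcov, hdisj, hecov, hpe, hqe⟩ :=
      cycle_split hC (hallCV u) (hallCV v) huv
    have hp2 : 2 ≤ p.length := by
      rcases Nat.lt_or_ge p.length 2 with h | h
      · exfalso
        have hl1 : p.length = 1 := by omega
        exact hnotC (hpe _ (edge_of_length_one p hl1))
      · exact h
    have hq2 : 2 ≤ q.length := by
      rcases Nat.lt_or_ge q.length 2 with h | h
      · exfalso
        have hl1 : q.length = 1 := by omega
        exact hnotC (hqe _ (edge_of_length_one q hl1))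
      · exact h
    set r : G.Walk u v := Walk.cons hGuv Walk.nil with hrdef
    have hrpath : r.IsPath := by
      rw [hrdef, Walk.cons_isPath_iff]
      exact ⟨Walk.IsPath.nil, by simp [huv]⟩
    have hrsup : ∀ x ∈ r.support, x = u ∨ x = v := by
      intro x hx
      rw [hrdef] at hx
      simpa using hx
    refine ⟨p.length, q.length, 1, by omega, by omega, le_refl 1, by omega, by omega, by omega,
      u, v, huv, p, q, r, hp, hq, hrpath, rfl, rfl, by simp [hrdef], hdisj, ?_, ?_, ?_, ?_⟩
    · intro x _ hxr
      exact hrsup x hxr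
    · intro x _ hxr
      exact hrsup x hxr
    · intro e' he'
      by_cases hC' : e' ∈ C.edges
      · rcases hecov e' hC' with h | h
        · exact Or.inl h
        · exact Or.inr (Or.inl h)
      · have hmem : e' ∈ H.edgeFinset :=
          SimpleGraph.mem_edgeFinset.mpr ((hHedgeSet e').mpr ⟨he', hC'⟩)
        rw [he, Finset.mem_singleton] at hmem
        refine Or.inr (Or.inr ?_)
        rw [hmem, hrdef]
        simp
    · intro x
      rcases hcov x (hallCV x) with h | h
      · exact Or.inl h
      · exact Or.inr (Or.inl h)
  · -- k ≥ 1 : ear case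
    set A : Finset V := CV.filter (fun c => 0 < H.degree c) with hAdef
    have hAmem : ∀ x, x ∈ A ↔ x ∈ CV ∧ 0 < H.degree x := by
      intro x; rw [hAdef]; simp
    have hAcard_le : A.card ≤ ∑ v ∈ CV, H.degree v := by
      calc A.card = ∑ _v ∈ A, 1 := by simp
      _ ≤ ∑ v ∈ A, H.degree v :=
          Finset.sum_le_sum (fun i hi => ((hAmem i).mp hi).2)
      _ ≤ ∑ v ∈ CV, H.degree v :=
          Finset.sum_le_sum_of_subset (Finset.filter_subset _ _)
    obtain ⟨a1, b1, hH1, ha1, hb1, _⟩ := hhit hkpos v0 ((hCVmem v0).mpr C.start_mem_support)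
    have hb1A : b1 ∈ A := (hAmem b1).mpr ⟨hb1,
      (SimpleGraph.degree_pos_iff_exists_adj _ _).mpr ⟨a1, hH1.symm⟩⟩
    obtain ⟨a2, b2, hH2, ha2, hb2, hb2b1⟩ := hhit hkpos b1 hb1
    have hb2A : b2 ∈ A := (hAmem b2).mpr ⟨hb2,
      (SimpleGraph.degree_pos_iff_exists_adj _ _).mpr ⟨a2, hH2.symm⟩⟩
    have hA2 : 2 ≤ A.card := Finset.one_lt_card.mpr ⟨b1, hb1A, b2, hb2A, Ne.symm hb2b1⟩
    have htsum : ∑ v ∈ CV, H.degree v = 2 := le_antisymm ht2 (le_trans hA2 hAcard_le)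
    have hoffsum : ∑ v ∈ CVᶜ, H.degree v = 2 * k := by omega
    -- all off-cycle vertices have H-degree exactly 2
    have hoff2 : ∀ x ∈ CVᶜ, H.degree x = 2 := by
      by_contra hcon
      push_neg at hcon
      obtain ⟨x, hx, hxne⟩ := hcon
      have hx3 : 3 ≤ H.degree x := by
        have := hoff2le x hx
        omega
      have h1 : ∑ v ∈ CVᶜ.erase x, H.degree v + H.degree x = ∑ v ∈ CVᶜ, H.degree v :=
        Finset.sum_erase_add _ _ hx
      have h2 : 2 * (k - 1) ≤ ∑ v ∈ CVᶜ.erase x, H.degree v := by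
        have h3 := Finset.card_nsmul_le_sum (CVᶜ.erase x) (fun v => H.degree v) 2
          (fun v hv => hoff2le v (Finset.mem_of_mem_erase hv))
        rw [smul_eq_mul, Finset.card_erase_of_mem hx, hoffcard, mul_comm] at h3
        exact h3
      omega
    -- CV vertices have H-degree at most 1
    have hCVdeg : ∀ x ∈ CV, H.degree x ≤ 1 := by
      intro x hx
      by_contra hcon
      push_neg at hcon
      have hxA : x ∈ A := (hAmem x).mpr ⟨hx, by omega⟩
      obtain ⟨y, hyA, hyx⟩ : ∃ y ∈ A, y ≠ x := by
        by_contra hcon2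
        push_neg at hcon2
        have hsub : A ⊆ {x} := fun z hz => Finset.mem_singleton.mpr (hcon2 z hz)
        have := Finset.card_le_card hsub
        simp at this
        omega
      have h2 : H.degree x + H.degree y ≤ ∑ v ∈ CV, H.degree v := by
        have hsub : ({x, y} : Finset V) ⊆ CV := by
          intro z hz
          rcases Finset.mem_insert.mp hz with h | h
          · exact h ▸ hx
          · exact (Finset.mem_singleton.mp h) ▸ ((hAmem y).mp hyA).1
        have := Finset.sum_le_sum_of_subset (f := fun v => H.degree v) hsub
        rwa [Finset.sum_pair (Ne.symm hyx)] at this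
      have hy1 : 1 ≤ H.degree y := ((hAmem y).mp hyA).2
      omega
    -- H is acyclic
    have hac : H.IsAcyclic := by
      intro v' D hD
      have hsupD : ∀ y ∈ D.support, y ∉ CV := by
        intro y hy hyCV
        obtain ⟨z₁, z₂, hne, hz1, hz2, _, _, _, _⟩ := cycle_two_nbrs hD hy
        have h2 : 2 ≤ H.degree y := by
          rw [SimpleGraph.degree]
          apply Finset.one_lt_card.mpr
          exact ⟨z₁, (H.mem_neighborFinset y z₁).mpr hz1,
            z₂, (H.mem_neighborFinset y z₂).mpr hz2, hne⟩
        have := hCVdeg y hyCV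
        omega
      have hclosed : ∀ a b : V, a ∈ {t : V | t ∈ D.support} → G.Adj a b →
          b ∈ {t : V | t ∈ D.support} := by
        intro a b ha hab
        have haoff : a ∉ CV := hsupD a ha
        have hH' : H.Adj a b := by
          have hmem : b ∈ H.neighborFinset a := by
            rw [hoffN a haoff, SimpleGraph.mem_neighborFinset]
            exact hab
          rwa [SimpleGraph.mem_neighborFinset] at hmem
        obtain ⟨z₁, z₂, hne, hz1, hz2, hz1s, hz2s, _, _⟩ := cycle_two_nbrs hD ha
        have hdeg2 : H.degree a = 2 := hoff2 a (Finset.mem_compl.mpr haoff)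
        have hNb : ({z₁, z₂} : Finset V) = H.neighborFinset a := by
          apply Finset.eq_of_subset_of_card_le
          · intro z hz
            rcases Finset.mem_insert.mp hz with h | h
            · exact h ▸ (H.mem_neighborFinset a z₁).mpr hz1
            · exact (Finset.mem_singleton.mp h) ▸ (H.mem_neighborFinset a z₂).mpr hz2
          · rw [← SimpleGraph.degree, hdeg2]
            rw [Finset.card_insert_of_notMem (by simpa using hne), Finset.card_singleton]
        have hbm : b ∈ ({z₁, z₂} : Finset V) := by
          rw [hNb, SimpleGraph.mem_neighborFinset]
          exact hH'
        rcases Finset.mem_insert.mp hbm with h | h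
        · exact h ▸ hz1s
        · exact (Finset.mem_singleton.mp h) ▸ hz2s
      obtain ⟨W⟩ := hconn.preconnected v' v0
      have hv0D : v0 ∈ {t : V | t ∈ D.support} :=
        walk_closed hclosed W D.start_mem_support
      exact hsupD v0 hv0D ((hCVmem v0).mpr C.start_mem_support)
    -- generic facts about a maximum path through an off-cycle vertex
    have hmaxfacts : ∀ x ∈ CVᶜ, ∀ (a b : V) (P : H.Walk a b), P.IsPath → x ∈ P.support →
        (∀ (a' b' : V) (Q : H.Walk a' b'), Q.IsPath → x ∈ Q.support → Q.length ≤ P.length) →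
        1 ≤ P.length ∧ a ≠ b ∧ a ∈ A ∧ b ∈ A := by
      intro x hx a b P hP hxP hmax
      have hdegx : H.degree x = 2 := hoff2 x hx
      have hPlen : 1 ≤ P.length := by
        obtain ⟨z, hz⟩ := (SimpleGraph.degree_pos_iff_exists_adj _ _).mp
          (by omega : 0 < H.degree x)
        have hzx : x ≠ z := H.ne_of_adj hz
        have hQ : (Walk.cons hz Walk.nil).IsPath := by
          rw [Walk.cons_isPath_iff]
          exact ⟨Walk.IsPath.nil, by simp [hzx]⟩
        have := hmax _ _ (Walk.cons hz Walk.nil) hQ (Walk.start_mem_support _)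
        simpa using this
      have hab : a ≠ b := by
        intro h
        subst h
        have hnil := path_eq_nil_of_loop hP
        rw [hnil] at hPlen
        simp at hPlen
      have hPnil : ¬ P.Nil := Walk.not_nil_of_ne hab
      have hdegb : H.degree b ≤ 1 := by
        by_contra hcon
        push_neg at hcon
        obtain ⟨z₁, hz₁m, z₂, hz₂m, hne⟩ := Finset.one_lt_card.mp hcon
        rw [SimpleGraph.mem_neighborFinset] at hz₁m hz₂m
        exact max_path_end_two_nbrs hac hP hxP hmax hne hz₁m hz₂m
      have hdega : H.degree a ≤ 1 := by
        by_contra hcon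
        push_neg at hcon
        obtain ⟨z₁, hz₁m, z₂, hz₂m, hne⟩ := Finset.one_lt_card.mp hcon
        rw [SimpleGraph.mem_neighborFinset] at hz₁m hz₂m
        refine max_path_end_two_nbrs hac hP.reverse
          (by rw [Walk.support_reverse, List.mem_reverse]; exact hxP)
          (fun a' b' Q hQ hxQ => ?_) hne hz₁m hz₂m
        rw [Walk.length_reverse]
        exact hmax a' b' Q hQ hxQ
      have hdegb1 : 0 < H.degree b := by
        obtain ⟨z, hadj, _, _⟩ := last_edge P hPnil
        exact (SimpleGraph.degree_pos_iff_exists_adj _ _).mpr ⟨z, hadj⟩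
      have hdega1 : 0 < H.degree a := by
        obtain ⟨z, hadj, _, _⟩ := first_edge P hPnil
        exact (SimpleGraph.degree_pos_iff_exists_adj _ _).mpr ⟨z, hadj⟩
      have haCV : a ∈ CV := by
        by_contra h
        have := hoff2 a (Finset.mem_compl.mpr h)
        omega
      have hbCV : b ∈ CV := by
        by_contra h
        have := hoff2 b (Finset.mem_compl.mpr h)
        omega
      exact ⟨hPlen, hab, (hAmem a).mpr ⟨haCV, hdega1⟩, (hAmem b).mpr ⟨hbCV, hdegb1⟩⟩
    obtain ⟨x0, hx0⟩ : ∃ x, x ∈ CVᶜ := Finset.card_pos.mp (by omega)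
    obtain ⟨a, b, P, hP, hxP, hmax⟩ := exists_max_path H x0
    obtain ⟨hPlen, hab, haA, hbA⟩ := hmaxfacts x0 hx0 a b P hP hxP hmax
    have hAeq : ({a, b} : Finset V) = A := by
      apply Finset.eq_of_subset_of_card_le
      · intro z hz
        rcases Finset.mem_insert.mp hz with h | h
        · exact h ▸ haA
        · exact (Finset.mem_singleton.mp h) ▸ hbA
      · rw [Finset.card_insert_of_notMem (by simpa using hab), Finset.card_singleton]
        omega
    -- every off-cycle vertex lies on P
    have hcover : ∀ x ∈ CVᶜ, x ∈ P.support := by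
      intro x hx
      obtain ⟨a', b', Q, hQ, hxQ, hmaxQ⟩ := exists_max_path H x
      obtain ⟨hQlen, hab', ha'A, hb'A⟩ := hmaxfacts x hx a' b' Q hQ hxQ hmaxQ
      rw [← hAeq] at ha'A hb'A
      have huniq := SimpleGraph.isAcyclic_iff_path_unique.mp hac
      rcases Finset.mem_insert.mp ha'A with h | h
      · subst h
        have hb' : b' = b := by
          rcases Finset.mem_insert.mp hb'A with h2 | h2
          · exact absurd h2.symm hab'
          · exact Finset.mem_singleton.mp h2
        subst hb'
        have heq := huniq ⟨Q, hQ⟩ ⟨P, hP⟩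
        have hQP : Q = P := congrArg Subtype.val heq
        exact hQP ▸ hxQ
      · have ha' : a' = b := Finset.mem_singleton.mp h
        subst ha'
        have hb' : b' = a := by
          rcases Finset.mem_insert.mp hb'A with h2 | h2
          · exact h2
          · exact absurd (Finset.mem_singleton.mp h2) (Ne.symm hab')
        subst hb'
        have heq := huniq ⟨Q.reverse, hQ.reverse⟩ ⟨P, hP⟩
        have hQP : Q.reverse = P := congrArg Subtype.val heq
        rw [← hQP, Walk.support_reverse, List.mem_reverse]
        exact hxQ
    -- counting: the support of P is exactly CVᶜ ∪ {a, b}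
    have haCV : a ∈ CV := ((hAmem a).mp haA).1
    have hbCV : b ∈ CV := ((hAmem b).mp hbA).1
    set F : Finset V := insert a (insert b CVᶜ) with hFdef
    have hFcard : F.card = k + 2 := by
      rw [hFdef, Finset.card_insert_of_notMem, Finset.card_insert_of_notMem, hoffcard]
      · simp only [Finset.mem_compl, not_not]
        exact hbCV
      · simp only [Finset.mem_insert, Finset.mem_compl, not_or, not_not]
        exact ⟨hab, haCV⟩
    have hFsub : F ⊆ P.support.toFinset := by
      intro z hz
      rw [List.mem_toFinset]
      rcases Finset.mem_insert.mp hz with h | h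
      · exact h ▸ P.start_mem_support
      · rcases Finset.mem_insert.mp h with h2 | h2
        · exact h2 ▸ P.end_mem_support
        · exact hcover z h2
    have hPedgesub : P.edges.toFinset ⊆ H.edgeFinset := by
      intro e he
      rw [List.mem_toFinset] at he
      exact SimpleGraph.mem_edgeFinset.mpr (P.edges_subset_edgeSet he)
    have hPedgecard : P.edges.toFinset.card = P.length := by
      rw [List.toFinset_card_of_nodup hP.isTrail.edges_nodup, Walk.length_edges]
    have hPsupcard : P.support.toFinset.card = P.length + 1 := by
      rw [List.toFinset_card_of_nodup hP.support_nodup, Walk.length_support]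
    have hPlen_le : P.length ≤ k + 1 := by
      have := Finset.card_le_card hPedgesub
      rw [hPedgecard, hHcard] at this
      exact this
    have hcard_eq : P.support.toFinset.card = k + 2 := by
      have h1 := Finset.card_le_card hFsub
      rw [hFcard] at h1
      omega
    have hPlen_eq : P.length = k + 1 := by omega
    have hFeq : F = P.support.toFinset := by
      apply Finset.eq_of_subset_of_card_le hFsub
      rw [hFcard, hcard_eq]
    have hEeq : P.edges.toFinset = H.edgeFinset := by
      apply Finset.eq_of_subset_of_card_le hPedgesub
      rw [hPedgecard, hHcard, hPlen_eq]
    -- transfer P to G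
    have hPtrans : ∀ e ∈ P.edges, e ∈ G.edgeSet := by
      intro e he
      exact ((hHedgeSet e).mp (P.edges_subset_edgeSet he)).1
    set r : G.Walk a b := P.transfer G hPtrans with hrdef
    have hrpath : r.IsPath := hP.transfer _
    have hredges : r.edges = P.edges := P.edges_transfer _
    have hrsupport : r.support = P.support := P.support_transfer _
    have hrlen : r.length = k + 1 := by
      have h1 : r.edges.length = r.length := r.length_edges
      have h2 : P.edges.length = P.length := P.length_edges
      rw [hredges, h2] at h1
      omega
    -- split the cycle at a and b
    obtain ⟨p, q, hp, hq, hp1, hq1, hpq, hpsub, hqsub, hcovC, hdisj, hecov, hpe, hqe⟩ :=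
      cycle_split hC ((hCVmem a).mp haCV) ((hCVmem b).mp hbCV) hab
    have hrsup_mem : ∀ x ∈ r.support, x = a ∨ x = b ∨ x ∈ CVᶜ := by
      intro x hx
      rw [hrsupport] at hx
      have : x ∈ F := hFeq ▸ List.mem_toFinset.mpr hx
      rcases Finset.mem_insert.mp this with h | h
      · exact Or.inl h
      · rcases Finset.mem_insert.mp h with h2 | h2
        · exact Or.inr (Or.inl h2)
        · exact Or.inr (Or.inr h2)
    refine ⟨p.length, q.length, k + 1, by omega, by omega, by omega, ?_, by omega, by omega,
      a, b, hab, p, q, r, hp, hq, hrpath, rfl, rfl, hrlen, hdisj, ?_, ?_, ?_, ?_⟩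
    · rintro ⟨hpl, hql⟩
      omega
    · intro x hxp hxr
      rcases hrsup_mem x hxr with h | h | h
      · exact Or.inl h
      · exact Or.inr h
      · exfalso
        exact (Finset.mem_compl.mp h) ((hCVmem x).mpr (hpsub x hxp))
    · intro x hxq hxr
      rcases hrsup_mem x hxr with h | h | h
      · exact Or.inl h
      · exact Or.inr h
      · exfalso
        exact (Finset.mem_compl.mp h) ((hCVmem x).mpr (hqsub x hxq))
    · intro e' he'
      by_cases hC' : e' ∈ C.edges
      · rcases hecov e' hC' with h | h
        · exact Or.inl h
        · exact Or.inr (Or.inl h)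
      · have hmem : e' ∈ H.edgeFinset :=
          SimpleGraph.mem_edgeFinset.mpr ((hHedgeSet e').mpr ⟨he', hC'⟩)
        rw [← hEeq, List.mem_toFinset] at hmem
        exact Or.inr (Or.inr (hredges ▸ hmem))
    · intro x
      by_cases hx : x ∈ CV
      · rcases hcovC x ((hCVmem x).mp hx) with h | h
        · exact Or.inl h
        · exact Or.inr (Or.inl h)
      · refine Or.inr (Or.inr ?_)
        rw [hrsupport]
        exact hcover x (Finset.mem_compl.mpr hx)
end

section
/- Let G be a density-minimal finite simple graph. Then the family ComponentFamily(G), consisting of all graphs each of whose connected components is a minor of G, is closed under minors, and its limiting density equals the density of G; that is, every n-vertex member has at most (m/n(G))·n edges, and there exist arbitrarily large members with density exactly m(G)/n(G). -/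
open SimpleGraph

/-- Membership in ComponentFamily(G): every connected component of `H` is a minor of `G`. -/
def InComponentFamily {V W : Type} (G : SimpleGraph V) (H : SimpleGraph W) : Prop :=
  ∀ C : H.ConnectedComponent, IsMinor (H.induce C.supp) G

/-! ### Auxiliary lemmas -/


/-- The homomorphism from an induced subgraph to the ambient graph. -/
def valHom {V : Type} (G : SimpleGraph V) (s : Set V) : G.induce s →g G where
  toFun := Subtype.val
  map_rel' := fun h => h

lemma singleton_induce_connected {V : Type} (G : SimpleGraph V) (a : V) :
    (G.induce {a}).Connected := by
  have : Nonempty ({a} : Set V) := ⟨⟨a, rfl⟩⟩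
  refine ⟨fun x y => ?_⟩
  have hx : x = y := by
    ext
    rcases x with ⟨x, hx⟩; rcases y with ⟨y, hy⟩
    simp only [Set.mem_singleton_iff] at hx hy
    simp [hx, hy]
  rw [hx]

lemma conn_iUnion {B I : Type} (Gr : SimpleGraph B) (K : SimpleGraph I) (S : I → Set B)
    (hS : ∀ i, (Gr.induce (S i)).Connected) (hK : K.Connected)
    (hadj : ∀ i j, K.Adj i j → ∃ b₁ ∈ S i, ∃ b₂ ∈ S j, Gr.Adj b₁ b₂) :
    (Gr.induce (⋃ i, S i)).Connected := by
  have hsub : ∀ i, S i ≤ ⋃ i, S i := fun i => Set.subset_iUnion S i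
  have within : ∀ (i : I) (x y : B) (hx : x ∈ S i) (hy : y ∈ S i),
      (Gr.induce (⋃ i, S i)).Reachable ⟨x, hsub i hx⟩ ⟨y, hsub i hy⟩ := by
    intro i x y hx hy
    have := (hS i).preconnected ⟨x, hx⟩ ⟨y, hy⟩
    exact this.map (Gr.induceHomOfLE (hsub i)).toHom
  have key : ∀ {i j : I} (p : K.Walk i j) (x y : B) (hx : x ∈ S i) (hy : y ∈ S j),
      (Gr.induce (⋃ i, S i)).Reachable ⟨x, hsub i hx⟩ ⟨y, hsub j hy⟩ := by
    intro i j p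
    induction p with
    | nil => exact fun x y hx hy => within _ x y hx hy
    | @cons i i' j h p ih =>
        intro x y hx hy
        obtain ⟨b₁, hb₁, b₂, hb₂, hgr⟩ := hadj _ _ h
        have hadj' : (Gr.induce (⋃ i, S i)).Adj ⟨b₁, hsub i hb₁⟩ ⟨b₂, hsub i' hb₂⟩ := hgr
        exact ((within i x b₁ hx hb₁).trans hadj'.reachable).trans (ih b₂ y hb₂ hy)
  have hne : Nonempty (⋃ i, S i : Set B) := by
    obtain ⟨i⟩ := hK.nonempty
    obtain ⟨x⟩ := (hS i).nonempty
    exact ⟨⟨x.1, hsub i x.2⟩⟩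
  refine ⟨?_⟩
  rintro ⟨x, hx⟩ ⟨y, hy⟩
  obtain ⟨i, hxi⟩ := Set.mem_iUnion.1 hx
  obtain ⟨j, hyj⟩ := Set.mem_iUnion.1 hy
  obtain ⟨p⟩ := hK.preconnected i j
  simpa using key p x y hxi hyj

lemma isMinor_induce {V : Type} (G : SimpleGraph V) (s : Set V) :
    IsMinor (G.induce s) G := by
  classical
  refine ⟨fun v => if h : v ∈ s then some ⟨v, h⟩ else none, ?_, ?_, ?_⟩
  · rintro ⟨v, hv⟩
    exact ⟨v, by simp [hv]⟩
  · rintro ⟨v, hv⟩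
    have hset : {x : V | (if h : x ∈ s then some (⟨x, h⟩ : s) else none) = some ⟨v, hv⟩}
        = {v} := by
      ext x
      constructor
      · intro hx
        simp only [Set.mem_setOf_eq] at hx
        by_cases h : x ∈ s
        · simp only [dif_pos h, Option.some.injEq, Subtype.mk.injEq] at hx
          simpa using hx
        · simp [dif_neg h] at hx
      · rintro rfl
        simp [hv]
    rw [hset]
    exact singleton_induce_connected G v
  · rintro ⟨v₁, hv₁⟩ ⟨v₂, hv₂⟩ hadj
    exact ⟨v₁, v₂, by simp [hv₁], by simp [hv₂], hadj⟩

lemma IsMinor.trans {W A B : Type} {K : SimpleGraph W} {H : SimpleGraph A}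
    {Gr : SimpleGraph B} (h₁ : IsMinor K H) (h₂ : IsMinor H Gr) : IsMinor K Gr := by
  obtain ⟨g, gsurj, gconn, gedge⟩ := h₁
  obtain ⟨f, fsurj, fconn, fedge⟩ := h₂
  refine ⟨fun b => (f b).bind g, ?_, ?_, ?_⟩
  · intro w
    obtain ⟨a, ha⟩ := gsurj w
    obtain ⟨b, hb⟩ := fsurj a
    exact ⟨b, by simp [hb, ha]⟩
  · intro w
    have hset : {b : B | ((f b).bind g) = some w}
        = ⋃ (i : {a : A | g a = some w}), {b : B | f b = some i.1} := by
      ext b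
      simp only [Set.mem_setOf_eq, Option.bind_eq_some_iff, Set.mem_iUnion]
      constructor
      · rintro ⟨a, hfa, hga⟩
        exact ⟨⟨a, hga⟩, hfa⟩
      · rintro ⟨⟨a, hga⟩, hfa⟩
        exact ⟨a, hfa, hga⟩
    rw [hset]
    refine conn_iUnion Gr (H.induce {a : A | g a = some w}) _ (fun i => fconn i.1)
      (gconn w) ?_
    rintro ⟨a₁, ha₁⟩ ⟨a₂, ha₂⟩ hadj
    obtain ⟨b₁, b₂, hb₁, hb₂, hGr⟩ := fedge a₁ a₂ hadj
    exact ⟨b₁, hb₁, b₂, hb₂, hGr⟩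
  · intro w₁ w₂ hadj
    obtain ⟨a₁, a₂, ha₁, ha₂, hH⟩ := gedge w₁ w₂ hadj
    obtain ⟨b₁, b₂, hb₁, hb₂, hGr⟩ := fedge a₁ a₂ hH
    exact ⟨b₁, b₂, by simp [hb₁, ha₁], by simp [hb₂, ha₂], hGr⟩

lemma density_nonneg {V : Type} [Fintype V] (G : SimpleGraph V) : 0 ≤ density G :=
  div_nonneg (Nat.cast_nonneg _) (Nat.cast_nonneg _)

lemma IsMinor.card_le {W V : Type} [Fintype W] [Fintype V] {H : SimpleGraph W}
    {G : SimpleGraph V} (h : IsMinor H G) : Fintype.card W ≤ Fintype.card V := by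
  classical
  obtain ⟨f, fsurj, -, -⟩ := h
  choose r hr using fsurj
  have hinj : Function.Injective r := by
    intro w₁ w₂ h
    have := hr w₁
    rw [h, hr w₂] at this
    exact (Option.some_injective _ this).symm
  exact Fintype.card_le_of_injective r hinj

lemma IsMinor.edgeCard_le {W V : Type} [Fintype W] [Fintype V] {H : SimpleGraph W}
    {G : SimpleGraph V} (h : IsMinor H G) :
    Nat.card H.edgeSet ≤ Nat.card G.edgeSet := by
  classical
  obtain ⟨f, -, -, fedge⟩ := h
  have hex : ∀ e : H.edgeSet, ∃ e' : G.edgeSet, Sym2.map f e'.1 = Sym2.map some e.1 := by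
    rintro ⟨e, he⟩
    induction e with
    | _ w₁ w₂ =>
      rw [SimpleGraph.mem_edgeSet] at he
      obtain ⟨v₁, v₂, hv₁, hv₂, hadj⟩ := fedge w₁ w₂ he
      exact ⟨⟨s(v₁, v₂), hadj⟩, by simp [Sym2.map_pair_eq, hv₁, hv₂]⟩
  choose ψ hψ using hex
  have hinj : Function.Injective ψ := by
    intro e₁ e₂ h
    have h2 : Sym2.map some e₁.1 = Sym2.map some e₂.1 := by
      rw [← hψ e₁, ← hψ e₂, h]
    exact Subtype.ext (Sym2.map.injective (Option.some_injective _) h2)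
  exact Nat.card_le_card_of_injective ψ hinj

lemma minor_density_le {V W : Type} [Fintype V] [Nonempty V] [Fintype W]
    {G : SimpleGraph V} (hdm : DensityMinimal G) (H : SimpleGraph W)
    (h : IsMinor H G) : density H ≤ density G := by
  cases isEmpty_or_nonempty W with
  | inl hW =>
      have h0 : Nat.card H.edgeSet = 0 := by
        have : IsEmpty H.edgeSet := by
          constructor
          rintro ⟨e, he⟩
          induction e with
          | _ w₁ w₂ => exact hW.elim w₁
        simp [Nat.card_of_isEmpty]
      rw [density, h0]
      simpa using density_nonneg G
  | inr hW =>
      by_cases hlt : Fintype.card W + Nat.card H.edgeSet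
          < Fintype.card V + Nat.card G.edgeSet
      · exact le_of_lt (hdm W H ⟨h, hlt⟩)
      · have h₁ := h.card_le
        have h₂ := h.edgeCard_le
        have hcw : Fintype.card W = Fintype.card V := by omega
        have hce : Nat.card H.edgeSet = Nat.card G.edgeSet := by omega
        rw [density, density, hcw, hce]

lemma comp_supp_connected {A : Type} (H : SimpleGraph A) (C : H.ConnectedComponent) :
    (H.induce C.supp).Connected := by
  classical
  obtain ⟨v₀, hv₀⟩ := C.exists_rep
  have hv₀s : v₀ ∈ C.supp := hv₀
  refine SimpleGraph.induce_connected_of_patches v₀ hv₀s ?_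
  intro v hv
  have hreach : H.Reachable v₀ v := by
    rw [SimpleGraph.ConnectedComponent.mem_supp_iff] at hv
    exact SimpleGraph.ConnectedComponent.exact (hv₀.trans hv.symm)
  obtain ⟨p⟩ := hreach
  have hsup : {x : A | x ∈ p.support} ⊆ C.supp := by
    intro x hx
    have : H.Reachable v₀ x := ⟨p.takeUntil x hx⟩
    rw [SimpleGraph.ConnectedComponent.mem_supp_iff, ← hv₀]
    exact SimpleGraph.ConnectedComponent.sound this.symm
  refine ⟨{x : A | x ∈ p.support}, hsup, p.start_mem_support, p.end_mem_support, ?_⟩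
  exact (p.connected_induce_support).preconnected _ _

lemma connected_minor_of_componentFamily {V A W : Type} {G : SimpleGraph V}
    {H : SimpleGraph A} (K : SimpleGraph W) [Nonempty W] (hK : K.Connected)
    (hm : IsMinor K H) (hcf : InComponentFamily G H) : IsMinor K G := by
  obtain ⟨f, fsurj, fconn, fedge⟩ := hm
  have within : ∀ (w : W) (a b : A), f a = some w → f b = some w → H.Reachable a b := by
    intro w a b ha hb
    have := (fconn w).preconnected ⟨a, ha⟩ ⟨b, hb⟩
    exact this.map (valHom H _)
  have claim : ∀ {w w' : W} (p : K.Walk w w') (a a' : A),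
      f a = some w → f a' = some w' → H.Reachable a a' := by
    intro w w' p
    induction p with
    | nil => exact fun a a' ha ha' => within _ a a' ha ha'
    | @cons w w₁ w' h p ih =>
        intro a a' ha ha'
        obtain ⟨b₁, b₂, hb₁, hb₂, hH⟩ := fedge _ _ h
        exact ((within _ a b₁ ha hb₁).trans hH.reachable).trans (ih b₂ a' hb₂ ha')
  obtain ⟨w₀⟩ := ‹Nonempty W›
  obtain ⟨a₀, ha₀⟩ := fsurj w₀
  set D := H.connectedComponentMk a₀ with hD
  have step1 : ∀ (w : W) (a : A), f a = some w → a ∈ D.supp := by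
    intro w a ha
    obtain ⟨p⟩ := hK.preconnected w w₀
    have : H.Reachable a a₀ := claim p a a₀ ha ha₀
    rw [SimpleGraph.ConnectedComponent.mem_supp_iff, hD]
    exact SimpleGraph.ConnectedComponent.sound this
  have step2 : IsMinor K (H.induce D.supp) := by
    refine ⟨fun x => f x.1, ?_, ?_, ?_⟩
    · intro w
      obtain ⟨a, ha⟩ := fsurj w
      exact ⟨⟨a, step1 w a ha⟩, ha⟩
    · intro w
      let φ : H.induce {a : A | f a = some w} →g
          (H.induce D.supp).induce {x : ↥D.supp | f x.1 = some w} :=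
        { toFun := fun x => ⟨⟨x.1, step1 w x.1 x.2⟩, x.2⟩
          map_rel' := fun h => h }
      have hsurj : Function.Surjective φ := by
        rintro ⟨⟨a, hD'⟩, ha⟩
        exact ⟨⟨a, ha⟩, by rfl⟩
      exact (fconn w).map φ hsurj
    · intro w₁ w₂ hadj
      obtain ⟨a₁, a₂, ha₁, ha₂, hH⟩ := fedge w₁ w₂ hadj
      exact ⟨⟨a₁, step1 w₁ a₁ ha₁⟩, ⟨a₂, step1 w₂ a₂ ha₂⟩, ha₁, ha₂, hH⟩
  exact step2.trans (hcf D)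

lemma card_vert_decomp {A : Type} [Fintype A] (H : SimpleGraph A)
    [Fintype H.ConnectedComponent] :
    Fintype.card A = ∑ C : H.ConnectedComponent, Nat.card C.supp := by
  classical
  have e1 : Nat.card A = Nat.card (Σ C : H.ConnectedComponent,
      {a : A // H.connectedComponentMk a = C}) :=
    (Nat.card_congr (Equiv.sigmaFiberEquiv (H.connectedComponentMk))).symm
  rw [← Nat.card_eq_fintype_card, e1]
  have h2 : ∀ C : H.ConnectedComponent,
      Nat.card {a : A // H.connectedComponentMk a = C} = Nat.card C.supp := by
    intro C
    exact Nat.card_congr (Equiv.subtypeEquivRight (fun a => Iff.rfl))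
  rw [Nat.card_eq_fintype_card, Fintype.card_sigma]
  refine Finset.sum_congr rfl fun C _ => ?_
  rw [← h2 C, Nat.card_eq_fintype_card]

lemma map_val_mem_edgeSet {A : Type} {H : SimpleGraph A} {s : Set A}
    (e : Sym2 s) (he : e ∈ (H.induce s).edgeSet) :
    Sym2.map Subtype.val e ∈ H.edgeSet := by
  induction e with
  | _ x y =>
    rw [SimpleGraph.mem_edgeSet] at he
    rw [Sym2.map_pair_eq, SimpleGraph.mem_edgeSet]
    exact he

lemma mem_supp_of_mem_map_val {A : Type} {H : SimpleGraph A} {C : H.ConnectedComponent}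
    (e : Sym2 C.supp) (a : A) (ha : a ∈ Sym2.map Subtype.val e) : a ∈ C.supp := by
  rw [Sym2.mem_map] at ha
  obtain ⟨x, -, rfl⟩ := ha
  exact x.2

lemma card_edge_decomp {A : Type} [Fintype A] (H : SimpleGraph A)
    [Fintype H.ConnectedComponent] :
    Nat.card H.edgeSet
      = ∑ C : H.ConnectedComponent, Nat.card (H.induce C.supp).edgeSet := by
  classical
  let F : (Σ C : H.ConnectedComponent, (H.induce C.supp).edgeSet) → H.edgeSet :=
    fun x => ⟨Sym2.map Subtype.val x.2.1, map_val_mem_edgeSet x.2.1 x.2.2⟩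
  have hbij : Function.Bijective F := by
    constructor
    · rintro ⟨C, e⟩ ⟨C', e'⟩ h
      have hv : Sym2.map Subtype.val e.1 = Sym2.map Subtype.val e'.1 :=
        congrArg Subtype.val h
      have hCC' : C = C' := by
        obtain ⟨a, hamem⟩ : ∃ a, a ∈ Sym2.map Subtype.val e.1 :=
          Sym2.ind (fun x y => ⟨x.1, by rw [Sym2.map_pair_eq]; exact Sym2.mem_mk_left _ _⟩) e.1
        have h1 : a ∈ C.supp := mem_supp_of_mem_map_val e.1 a hamem
        have h2 : a ∈ C'.supp := mem_supp_of_mem_map_val e'.1 a (hv ▸ hamem)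
        rw [SimpleGraph.ConnectedComponent.mem_supp_iff] at h1 h2
        rw [← h1, ← h2]
      subst hCC'
      have : e = e' := Subtype.ext (Sym2.map.injective Subtype.val_injective hv)
      rw [this]
    · rintro ⟨z, hz⟩
      induction z with
      | _ x y =>
        rw [SimpleGraph.mem_edgeSet] at hz
        set C := H.connectedComponentMk x with hC
        have hx : x ∈ C.supp := rfl
        have hy : y ∈ C.supp := by
          rw [SimpleGraph.ConnectedComponent.mem_supp_iff, hC]
          exact SimpleGraph.ConnectedComponent.sound hz.symm.reachable
        refine ⟨⟨C, ⟨s((⟨x, hx⟩ : C.supp), (⟨y, hy⟩ : C.supp)), hz⟩⟩, ?_⟩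
        apply Subtype.ext
        simp [F, Sym2.map_pair_eq]
  have hc := Nat.card_congr (Equiv.ofBijective F hbij)
  rw [← hc, Nat.card_eq_fintype_card, Fintype.card_sigma]
  refine Finset.sum_congr rfl fun C _ => ?_
  rw [Nat.card_eq_fintype_card]

/-- k disjoint copies of G, on vertex type `Fin k × V`. -/
def copies {V : Type} (G : SimpleGraph V) (k : ℕ) : SimpleGraph (Fin k × V) where
  Adj x y := x.1 = y.1 ∧ G.Adj x.2 y.2
  symm := ⟨fun x y h => ⟨h.1.symm, h.2.symm⟩⟩
  loopless := ⟨fun x h => G.irrefl h.2⟩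

lemma copies_edgeCard {V : Type} [Fintype V] (G : SimpleGraph V) (k : ℕ) :
    Nat.card (copies G k).edgeSet = k * Nat.card G.edgeSet := by
  classical
  have hmem : ∀ (i : Fin k) (e : Sym2 V), e ∈ G.edgeSet →
      Sym2.map (fun v => (i, v)) e ∈ (copies G k).edgeSet := by
    intro i e
    induction e with
    | _ x y =>
      rw [SimpleGraph.mem_edgeSet, Sym2.map_pair_eq, SimpleGraph.mem_edgeSet]
      exact fun h => ⟨rfl, h⟩
  have hfst : ∀ (i : Fin k) (e : Sym2 V) (a : Fin k × V),
      a ∈ Sym2.map (fun v => (i, v)) e → a.1 = i := by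
    intro i e a ha
    rw [Sym2.mem_map] at ha
    obtain ⟨x, -, rfl⟩ := ha
    rfl
  let F : Fin k × G.edgeSet → (copies G k).edgeSet :=
    fun p => ⟨Sym2.map (fun v => (p.1, v)) p.2.1, hmem p.1 p.2.1 p.2.2⟩
  have hbij : Function.Bijective F := by
    constructor
    · rintro ⟨i, e⟩ ⟨j, e'⟩ h
      have hv : Sym2.map (fun v => (i, v)) e.1 = Sym2.map (fun v => (j, v)) e'.1 :=
        congrArg Subtype.val h
      have hij : i = j := by
        obtain ⟨a, hamem⟩ : ∃ a, a ∈ Sym2.map (fun v => (i, v)) e.1 :=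
          Sym2.ind (fun x y => ⟨(i, x), by rw [Sym2.map_pair_eq]; exact Sym2.mem_mk_left _ _⟩) e.1
        have h1 := hfst i e.1 a hamem
        have h2 := hfst j e'.1 a (hv ▸ hamem)
        rw [← h1, ← h2]
      subst hij
      have hinj : Function.Injective (fun v : V => (i, v)) := by
        intro a b h
        exact congrArg Prod.snd h
      have : e = e' := Subtype.ext (Sym2.map.injective hinj hv)
      rw [this]
    · rintro ⟨z, hz⟩
      induction z with
      | _ x y =>
        rw [SimpleGraph.mem_edgeSet] at hz
        obtain ⟨h1, h2⟩ := hz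
        refine ⟨(x.1, ⟨s(x.2, y.2), h2⟩), ?_⟩
        apply Subtype.ext
        have hyy : y = (x.1, y.2) := Prod.ext h1.symm rfl
        simp only [F, Sym2.map_pair_eq]
        rw [hyy]
  have hc := Nat.card_congr (Equiv.ofBijective F hbij)
  rw [← hc, Nat.card_prod, Nat.card_eq_fintype_card (α := Fin k), Fintype.card_fin]


/-- For a density-minimal graph G, the family ComponentFamily(G) is
minor-closed, every member has density at most the density of G, and it contains
arbitrarily large members with density exactly that of G; hence its limiting density
equals the density of G. -/
theorem stmt14 (V : Type) [Fintype V] [Nonempty V] (G : SimpleGraph V)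
    (hdm : DensityMinimal G) :
    (∀ (A B : Type) [Fintype A] [Fintype B] (H : SimpleGraph A) (H' : SimpleGraph B),
        IsMinor H' H → InComponentFamily G H → InComponentFamily G H') ∧
      (∀ (A : Type) [Fintype A] (H : SimpleGraph A),
        InComponentFamily G H → density H ≤ density G) ∧
      (∀ N : ℕ, ∃ (n : ℕ) (H : SimpleGraph (Fin n)),
        N ≤ n ∧ InComponentFamily G H ∧ density H = density G) := by
  refine ⟨?_, ?_, ?_⟩
  · -- minor-closedness
    intro A B _ _ H H' hm hcf C
    have hne : Nonempty ↥C.supp := by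
      obtain ⟨v, hv⟩ := C.exists_rep
      exact ⟨⟨v, hv⟩⟩
    exact connected_minor_of_componentFamily (H'.induce C.supp)
      (comp_supp_connected H' C) ((isMinor_induce H' C.supp).trans hm) hcf
  · -- density bound
    intro A _ H hcf
    classical
    rcases Nat.eq_zero_or_pos (Fintype.card A) with hA | hA
    · rw [density, hA, Nat.cast_zero, div_zero]
      exact density_nonneg G
    · letI : Fintype H.ConnectedComponent := Fintype.ofFinite _
      have hv := card_vert_decomp H
      have he := card_edge_decomp H
      have key : ∀ C : H.ConnectedComponent,
          ((Nat.card (H.induce C.supp).edgeSet : ℝ))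
            ≤ density G * (Nat.card C.supp : ℝ) := by
        intro C
        letI : Fintype ↥C.supp := Fintype.ofFinite _
        have hne : Nonempty ↥C.supp := by
          obtain ⟨v, hv'⟩ := C.exists_rep
          exact ⟨⟨v, hv'⟩⟩
        have hle := minor_density_le hdm (H.induce C.supp) (hcf C)
        rw [density] at hle
        have hpos : (0 : ℝ) < (Fintype.card ↥C.supp : ℝ) := by
          exact_mod_cast Fintype.card_pos
        rw [div_le_iff₀ hpos] at hle
        calc (Nat.card (H.induce C.supp).edgeSet : ℝ)
            ≤ density G * (Fintype.card ↥C.supp : ℝ) := hle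
          _ = density G * (Nat.card C.supp : ℝ) := by rw [Nat.card_eq_fintype_card]
      have hApos : (0 : ℝ) < (Fintype.card A : ℝ) := by exact_mod_cast hA
      rw [density, div_le_iff₀ hApos]
      rw [he, hv]
      push_cast
      rw [Finset.mul_sum]
      exact Finset.sum_le_sum fun C _ => key C
  · -- arbitrarily large members of maximal density
    intro N
    classical
    set k := N + 1 with hk
    set n := k * Fintype.card V with hn
    have hcard : Fintype.card (Fin n) = Fintype.card (Fin k × V) := by
      simp [hn]
    have q : Fin n ≃ (Fin k × V) := Fintype.equivOfCardEq hcard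
    set P := copies G k with hP
    set H : SimpleGraph (Fin n) := P.comap q with hH
    have hfstR : ∀ a b : Fin n, H.Reachable a b → (q a).1 = (q b).1 := by
      intro a b hr
      obtain ⟨p⟩ := hr
      induction p with
      | nil => rfl
      | @cons a c b h p ih =>
          have hP' : P.Adj (q a) (q c) := h
          exact hP'.1.trans ih
    refine ⟨n, H, ?_, ?_, ?_⟩
    · calc N ≤ k := Nat.le_succ N
        _ = k * 1 := (mul_one k).symm
        _ ≤ k * Fintype.card V := Nat.mul_le_mul_left k Fintype.card_pos
    · -- InComponentFamily
      intro C
      obtain ⟨x₀, hx₀⟩ := C.exists_rep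
      set i := (q x₀).1 with hi
      have hmemfst : ∀ x : Fin n, x ∈ C.supp → (q x).1 = i := by
        intro x hx
        rw [SimpleGraph.ConnectedComponent.mem_supp_iff] at hx
        exact hfstR x x₀ (SimpleGraph.ConnectedComponent.exact (hx.trans hx₀.symm))
      have hqs : ∀ (x : Fin n), x ∈ C.supp → q.symm (i, (q x).2) = x := by
        intro x hx
        have : (i, (q x).2) = q x := Prod.ext (hmemfst x hx).symm rfl
        rw [this, Equiv.symm_apply_apply]
      refine ⟨fun v => if h : q.symm (i, v) ∈ C.supp then some ⟨q.symm (i, v), h⟩ else none,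
        ?_, ?_, ?_⟩
      · rintro ⟨x, hx⟩
        refine ⟨(q x).2, ?_⟩
        simp only [hqs x hx]
        rw [dif_pos hx]
      · rintro ⟨x, hx⟩
        have hset : {v : V | (if h : q.symm (i, v) ∈ C.supp
            then some (⟨q.symm (i, v), h⟩ : ↥C.supp) else none) = some ⟨x, hx⟩}
            = {(q x).2} := by
          ext v
          simp only [Set.mem_setOf_eq, Set.mem_singleton_iff]
          constructor
          · intro hv
            by_cases h : q.symm (i, v) ∈ C.supp
            · rw [dif_pos h, Option.some.injEq, Subtype.mk.injEq] at hv
              have : (i, v) = q x := by rw [← hv, Equiv.apply_symm_apply]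
              exact congrArg Prod.snd this
            · rw [dif_neg h] at hv
              exact absurd hv (by simp)
          · rintro rfl
            simp only [hqs x hx]
            rw [dif_pos hx]
        rw [hset]
        exact singleton_induce_connected G _
      · rintro ⟨x₁, h₁⟩ ⟨x₂, h₂⟩ hadj
        have hP' : P.Adj (q x₁) (q x₂) := hadj
        refine ⟨(q x₁).2, (q x₂).2, ?_, ?_, hP'.2⟩
        · simp only [hqs x₁ h₁]
          rw [dif_pos h₁]
        · simp only [hqs x₂ h₂]
          rw [dif_pos h₂]
    · -- density computation
      have hiso : H ≃g P := ⟨q, Iff.rfl⟩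
      have hec : Nat.card H.edgeSet = Nat.card P.edgeSet :=
        Nat.card_congr hiso.mapEdgeSet
      have hPe : Nat.card P.edgeSet = k * Nat.card G.edgeSet := copies_edgeCard G k
      rw [density, density, hec, hPe, Fintype.card_fin, hn]
      have hk0 : ((N : ℝ) + 1) ≠ 0 := by positivity
      rw [hk]
      push_cast
      rw [mul_div_mul_left _ _ hk0]
end
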